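/- Let G' be a graph and G = G' + K_1 the disjoint union of G' with a single isolated vertex. Let H be a graph with an isolated vertex v, and H' = H − v. Then for every k, G' can be made H'-free by at most k edge contractions if and only if G can be made H-free by at most k edge contractions. -/

import Mathlib

variable {V W : Type*}

/-- Contraction of a graph by a partition (setoid): two classes are adjacent
iff they are distinct and joined by an edge of `G`. -/
def contractQ (G : SimpleGraph V) (s : Setoid V) : SimpleGraph (Quotient s) where
  Adj x y := x ≠ y ∧ ∃ a b : V, Quotient.mk s a = x ∧ Quotient.mk s b = y ∧ G.Adj a b
  symm := by
    constructor
    rintro x y ⟨hne, a, b, ha, hb, hab⟩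
    exact ⟨hne.symm, b, a, hb, ha, hab.symm⟩
  loopless := by
    constructor
    rintro x ⟨hne, -⟩
    exact hne rfl

/-- The partition of the vertices induced by contracting a set `F` of edges of `G`. -/
def edgeSetoid (G : SimpleGraph V) (F : Set (Sym2 V)) : Setoid V :=
  Relation.EqvGen.setoid (fun a b => G.Adj a b ∧ s(a, b) ∈ F)

/-- The graph `G/F` obtained from `G` by contracting the edges in `F`. -/
def contractE (G : SimpleGraph V) (F : Set (Sym2 V)) :
    SimpleGraph (Quotient (edgeSetoid G F)) := contractQ G (edgeSetoid G F)

/-- `G` contains an induced copy of `H`. -/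
def HasInducedCopy (H : SimpleGraph W) (G : SimpleGraph V) : Prop :=
  ∃ f : W ↪ V, ∀ a b : W, H.Adj a b ↔ G.Adj (f a) (f b)

/-- `G` can be turned into an `H`-free graph by contracting at most `k` of its edges. -/
def ContractsToFree (G : SimpleGraph V) (k : ℕ) (H : SimpleGraph W) : Prop :=
  ∃ F : Finset (Sym2 V), ↑F ⊆ G.edgeSet ∧ F.card ≤ k ∧
    ¬ HasInducedCopy H (contractE G (↑F : Set (Sym2 V)))

/-- The cost of the partition given by a setoid: the sum over classes of (size - 1). -/
noncomputable def setoidCost (s : Setoid V) : ℕ :=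
  ∑ᶠ c : Quotient s, ({v : V | Quotient.mk s v = c}.ncard - 1)

namespace DUK1

open Sum

variable (G' : SimpleGraph V) (F : Set (Sym2 V))

/-- The sum graph. -/
abbrev GS : SimpleGraph (V ⊕ Fin 1) := G'.sum (⊥ : SimpleGraph (Fin 1))

/-- The lifted edge set. -/
abbrev FM : Set (Sym2 (V ⊕ Fin 1)) := Sym2.map Sum.inl '' F

lemma gs_adj_iff (x y : V ⊕ Fin 1) :
    (GS G').Adj x y ↔ ∃ a b : V, x = inl a ∧ y = inl b ∧ G'.Adj a b := by
  cases x with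
  | inl a => cases y with
    | inl b =>
      simp only [SimpleGraph.sum_adj]
      constructor
      · intro h; exact ⟨a, b, rfl, rfl, h⟩
      · rintro ⟨a', b', ha, hb, h⟩
        cases ha; cases hb; exact h
    | inr i => simp [SimpleGraph.sum_adj]
  | inr i => cases y with
    | inl b => simp [SimpleGraph.sum_adj]
    | inr j => simp [SimpleGraph.sum_adj]

lemma base_iff (x y : V ⊕ Fin 1) :
    ((GS G').Adj x y ∧ s(x, y) ∈ FM F) ↔
      ∃ a b : V, x = inl a ∧ y = inl b ∧ (G'.Adj a b ∧ s(a, b) ∈ F) := by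
  constructor
  · rintro ⟨hadj, e, heF, hmap⟩
    obtain ⟨a, b, rfl, rfl, hab⟩ := (gs_adj_iff G' x y).1 hadj
    refine ⟨a, b, rfl, rfl, hab, ?_⟩
    induction e with
    | _ c d =>
      rw [Sym2.map_pair_eq, Sym2.eq_iff] at hmap
      rcases hmap with ⟨h1, h2⟩ | ⟨h1, h2⟩
      · cases inl_injective h1; cases inl_injective h2; exact heF
      · cases inl_injective h1; cases inl_injective h2
        rwa [Sym2.eq_swap]
  · rintro ⟨a, b, rfl, rfl, hab, hF⟩
    refine ⟨(gs_adj_iff G' _ _).2 ⟨a, b, rfl, rfl, hab⟩, s(a, b), hF, ?_⟩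
    rw [Sym2.map_pair_eq]

lemma inr_fixed {x y : V ⊕ Fin 1}
    (h : Relation.EqvGen (fun a b => (GS G').Adj a b ∧ s(a, b) ∈ FM F) x y) :
    ∀ i : Fin 1, x = inr i ↔ y = inr i := by
  induction h with
  | rel x y h =>
    obtain ⟨a, b, rfl, rfl, -⟩ := (base_iff G' F x y).1 h
    simp
  | refl x => exact fun i => Iff.rfl
  | symm x y h ih => exact fun i => (ih i).symm
  | trans x y z h1 h2 ih1 ih2 => exact fun i => (ih1 i).trans (ih2 i)

lemma inl_to_inl {x y : V ⊕ Fin 1}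
    (h : Relation.EqvGen (fun a b => (GS G').Adj a b ∧ s(a, b) ∈ FM F) x y) :
    ∀ a : V, x = inl a → ∃ b : V, y = inl b ∧
      Relation.EqvGen (fun a b => G'.Adj a b ∧ s(a, b) ∈ F) a b := by
  induction h with
  | rel x y h =>
    rintro a rfl
    obtain ⟨a', b', ha, rfl, hr⟩ := (base_iff G' F _ _).1 h
    cases inl_injective ha
    exact ⟨b', rfl, Relation.EqvGen.rel _ _ hr⟩
  | refl x => rintro a rfl; exact ⟨a, rfl, Relation.EqvGen.refl a⟩
  | symm x y h ih =>
    rintro a rfl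
    cases x with
    | inl b =>
      obtain ⟨c, hc, hr⟩ := ih b rfl
      cases inl_injective hc
      exact ⟨b, rfl, hr.symm _ _⟩
    | inr i =>
      exfalso
      have := (inr_fixed G' F h i).1 rfl
      simp at this
  | trans x y z h1 h2 ih1 ih2 =>
    rintro a rfl
    obtain ⟨c, rfl, hr1⟩ := ih1 a rfl
    obtain ⟨b, rfl, hr2⟩ := ih2 c rfl
    exact ⟨b, rfl, hr1.trans _ _ _ hr2⟩

lemma inl_rel_inl {a b : V} :
    Relation.EqvGen (fun a b => (GS G').Adj a b ∧ s(a, b) ∈ FM F) (inl a) (inl b) ↔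
      Relation.EqvGen (fun a b => G'.Adj a b ∧ s(a, b) ∈ F) a b := by
  constructor
  · intro h
    obtain ⟨c, hc, hr⟩ := inl_to_inl G' F h a rfl
    cases inl_injective hc
    exact hr
  · intro h
    induction h with
    | rel x y h =>
      exact Relation.EqvGen.rel _ _ ((base_iff G' F _ _).2 ⟨x, y, rfl, rfl, h⟩)
    | refl x => exact Relation.EqvGen.refl _
    | symm x y h ih => exact ih.symm _ _
    | trans x y z h1 h2 ih1 ih2 => exact ih1.trans _ _ _ ih2


def liftQ : Quotient (edgeSetoid G' F) → Quotient (edgeSetoid (GS G') (FM F)) :=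
  Quotient.lift (fun a => Quotient.mk _ (inl a))
    (fun a b h => Quotient.sound ((inl_rel_inl G' F).2 h))

lemma liftQ_mk (a : V) :
    liftQ G' F (Quotient.mk _ a) = Quotient.mk _ (inl a) := rfl

lemma liftQ_inj : Function.Injective (liftQ G' F) := by
  intro x y h
  induction x using Quotient.ind
  induction y using Quotient.ind
  exact Quotient.sound ((inl_rel_inl G' F).1 (Quotient.exact h))

lemma mk_inr_ne_liftQ (i : Fin 1) (x : Quotient (edgeSetoid G' F)) :
    Quotient.mk _ (inr i) ≠ liftQ G' F x := by
  induction x using Quotient.ind with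
  | _ a =>
    intro h
    have := (inr_fixed G' F (Quotient.exact h) i).1 rfl
    simp at this

lemma not_adj_inr (i : Fin 1) (y : Quotient (edgeSetoid (GS G') (FM F))) :
    ¬ (contractE (GS G') (FM F)).Adj (Quotient.mk _ (inr i)) y := by
  rintro ⟨hne, a, b, ha, hb, hab⟩
  obtain ⟨a', b', rfl, rfl, -⟩ := (gs_adj_iff G' a b).1 hab
  exact (mk_inr_ne_liftQ G' F i (Quotient.mk _ a')) ha.symm

lemma adj_liftQ (x y : Quotient (edgeSetoid G' F)) :
    (contractE (GS G') (FM F)).Adj (liftQ G' F x) (liftQ G' F y) ↔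
      (contractE G' F).Adj x y := by
  induction x using Quotient.ind with
  | _ a =>
  induction y using Quotient.ind with
  | _ b =>
  constructor
  · rintro ⟨hne, c, d, hc, hd, hcd⟩
    obtain ⟨c', d', rfl, rfl, hcd'⟩ := (gs_adj_iff G' c d).1 hcd
    refine ⟨fun h => hne (congrArg (liftQ G' F) h), c', d', ?_, ?_, hcd'⟩
    · exact Quotient.sound ((inl_rel_inl G' F).1 (Quotient.exact hc))
    · exact Quotient.sound ((inl_rel_inl G' F).1 (Quotient.exact hd))
  · rintro ⟨hne, c, d, hc, hd, hcd⟩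
    refine ⟨fun h => hne (liftQ_inj G' F h), inl c, inl d, ?_, ?_, ?_⟩
    · exact Quotient.sound ((inl_rel_inl G' F).2 (Quotient.exact hc))
    · exact Quotient.sound ((inl_rel_inl G' F).2 (Quotient.exact hd))
    · exact (gs_adj_iff G' _ _).2 ⟨c, d, rfl, rfl, hcd⟩

lemma surjQ (z : Quotient (edgeSetoid (GS G') (FM F))) :
    z = Quotient.mk _ (inr 0) ∨ ∃ x, liftQ G' F x = z := by
  induction z using Quotient.ind with
  | _ a =>
    cases a with
    | inl a => exact Or.inr ⟨Quotient.mk _ a, rfl⟩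
    | inr i =>
      left
      congr
      exact Subsingleton.elim i 0


variable {W : Type*} (H : SimpleGraph W) (v : W)

lemma copy_iff (hv : ∀ u : W, ¬ H.Adj v u) :
    HasInducedCopy H (contractE (GS G') (FM F)) ↔
      HasInducedCopy (H.induce {u : W | u ≠ v}) (contractE G' F) := by
  classical
  constructor
  · rintro ⟨f, hf⟩
    choose down hd using
      (fun (z : Quotient (edgeSetoid (GS G') (FM F))) (hz : z ≠ Quotient.mk _ (inr 0)) =>
        (surjQ G' F z).resolve_left hz)
    have hiso : ∀ u w : W, f u = Quotient.mk _ (inr 0) → ¬ H.Adj u w := by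
      intro u w hu hadj
      exact not_adj_inr G' F 0 (f w) (hu ▸ (hf u w).1 hadj)
    by_cases hc : ∃ u : W, u ≠ v ∧ f u = Quotient.mk _ (inr 0)
    · obtain ⟨u₀, hu₀v, hu₀⟩ := hc
      have hfv : f v ≠ Quotient.mk _ (inr 0) := by
        intro h
        exact hu₀v (f.injective (hu₀.trans h.symm))
      have hfne : ∀ u : W, u ≠ u₀ → f u ≠ Quotient.mk _ (inr 0) := by
        intro u h1 h
        exact h1 (f.injective (h.trans hu₀.symm))
      set f0 : {u : W | u ≠ v} → Quotient (edgeSetoid G' F) :=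
        fun a => if h : (a : W) = u₀ then down (f v) hfv
          else down (f a) (hfne a h) with hf0def
      have hf0 : ∀ a : {u : W | u ≠ v},
          liftQ G' F (f0 a) = if (a : W) = u₀ then f v else f (a : W) := by
        intro a
        by_cases h : (a : W) = u₀ <;> simp [hf0def, h, hd]
      have hinj : Function.Injective f0 := by
        intro a b hab
        have := congrArg (liftQ G' F) hab
        rw [hf0, hf0] at this
        split_ifs at this with h1 h2 h2
        · exact Subtype.ext (h1.trans h2.symm)
        · exact absurd (f.injective this).symm b.2
        · exact absurd (f.injective this) a.2
        · exact Subtype.ext (f.injective this)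
      refine ⟨⟨f0, hinj⟩, ?_⟩
      intro a b
      show H.Adj (a : W) (b : W) ↔ _
      simp only [Function.Embedding.coeFn_mk]
      rw [← adj_liftQ, hf0, hf0]
      split_ifs with h1 h2 h2
      · rw [h1, h2]
        exact iff_of_false (H.irrefl) ((contractE (GS G') (FM F)).irrefl)
      · exact iff_of_false (h1 ▸ hiso u₀ (b : W) hu₀)
          (fun h => hv (b : W) (((hf v (b : W)).2 h)))
      · refine iff_of_false (fun h => hiso u₀ (a : W) hu₀ (by rw [← h2]; exact h.symm))
          (fun h => hv (a : W) ((hf v (a : W)).2 h.symm))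
      · exact hf (a : W) (b : W)
    · push_neg at hc
      set f0 : {u : W | u ≠ v} → Quotient (edgeSetoid G' F) :=
        fun a => down (f a) (hc a a.2) with hf0def
      have hf0 : ∀ a : {u : W | u ≠ v}, liftQ G' F (f0 a) = f (a : W) := by
        intro a; simp [hf0def, hd]
      have hinj : Function.Injective f0 := by
        intro a b hab
        have := congrArg (liftQ G' F) hab
        rw [hf0, hf0] at this
        exact Subtype.ext (f.injective this)
      refine ⟨⟨f0, hinj⟩, ?_⟩
      intro a b
      show H.Adj (a : W) (b : W) ↔ _
      simp only [Function.Embedding.coeFn_mk]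
      rw [← adj_liftQ, hf0, hf0]
      exact hf (a : W) (b : W)
  · rintro ⟨f, hf⟩
    refine ⟨⟨fun u => if h : u = v then Quotient.mk _ (inr 0)
      else liftQ G' F (f ⟨u, h⟩), ?_⟩, ?_⟩
    · intro u w huw
      dsimp only at huw
      split_ifs at huw with h1 h2 h2
      · exact h1.trans h2.symm
      · exact absurd huw (mk_inr_ne_liftQ G' F 0 _)
      · exact absurd huw.symm (mk_inr_ne_liftQ G' F 0 _)
      · have := f.injective (liftQ_inj G' F huw)
        exact congrArg Subtype.val this
    · intro a b
      show H.Adj a b ↔ (contractE (GS G') (FM F)).Adj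
        (if h : a = v then Quotient.mk _ (inr 0) else liftQ G' F (f ⟨a, h⟩))
        (if h : b = v then Quotient.mk _ (inr 0) else liftQ G' F (f ⟨b, h⟩))
      split_ifs with h1 h2 h2
      · rw [h1, h2]
        exact iff_of_false (H.irrefl) ((contractE (GS G') (FM F)).irrefl)
      · exact iff_of_false (h1 ▸ hv b) (not_adj_inr G' F 0 _)
      · exact iff_of_false (fun h => hv a (h2 ▸ h.symm))
          (fun h => not_adj_inr G' F 0 _ h.symm)
      · exact (hf ⟨a, h1⟩ ⟨b, h2⟩).trans (adj_liftQ G' F _ _).symm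


lemma edge_up [DecidableEq (Sym2 (V ⊕ Fin 1))] {F : Finset (Sym2 V)} (hF : ↑F ⊆ G'.edgeSet) :
    ↑(F.image (Sym2.map (Sum.inl : V → V ⊕ Fin 1))) ⊆ (GS G').edgeSet := by
  intro e he
  rw [Finset.coe_image] at he
  obtain ⟨e₀, he₀, rfl⟩ := he
  induction e₀ with
  | _ a b =>
    rw [Sym2.map_pair_eq, SimpleGraph.mem_edgeSet]
    exact (gs_adj_iff G' _ _).2 ⟨a, b, rfl, rfl, hF he₀⟩

lemma edge_down {e : Sym2 (V ⊕ Fin 1)} (he : e ∈ (GS G').edgeSet) :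
    ∃ a b : V, e = s(inl a, inl b) ∧ G'.Adj a b := by
  induction e with
  | _ x y =>
    obtain ⟨a, b, rfl, rfl, hab⟩ := (gs_adj_iff G' x y).1 he
    exact ⟨a, b, rfl, hab⟩

end DUK1

/-- If `H` has an isolated vertex `v` and `H' = H - v`, then for every `k`,
`G'` can be made `H'`-free by at most `k` edge contractions iff `G' + K_1` can be made
`H`-free by at most `k` edge contractions. -/
theorem disjoint_union_K1_iff {V W : Type*} (G' : SimpleGraph V)
    (H : SimpleGraph W) (v : W) (hv : ∀ u : W, ¬ H.Adj v u) (k : ℕ) :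
    ContractsToFree G' k (H.induce {u : W | u ≠ v}) ↔
      ContractsToFree (G'.sum (⊥ : SimpleGraph (Fin 1))) k H := by
  classical
  constructor
  · rintro ⟨F, hF, hcard, hfree⟩
    refine ⟨F.image (Sym2.map Sum.inl), DUK1.edge_up G' hF,
      le_trans (Finset.card_image_le) hcard, ?_⟩
    rw [Finset.coe_image]
    intro hcopy
    exact hfree ((DUK1.copy_iff G' ↑F H v hv).1 hcopy)
  · rintro ⟨F, hF, hcard, hfree⟩
    have hex : ∃ F₀ : Finset (Sym2 V), ↑F₀ ⊆ G'.edgeSet ∧ F₀.card ≤ F.card ∧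
        F₀.image (Sym2.map Sum.inl) = F := by
      rcases F.eq_empty_or_nonempty with rfl | ⟨e, he⟩
      · exact ⟨∅, by simp, by simp, by simp⟩
      · obtain ⟨a, b, -, -⟩ := DUK1.edge_down G' (hF he)
        haveI : Nonempty V := ⟨a⟩
        set ret : V ⊕ Fin 1 → V := Sum.elim id (fun _ => Classical.arbitrary V) with hret
        refine ⟨F.image (Sym2.map ret), ?_, Finset.card_image_le, ?_⟩
        · intro e' he'
          rw [Finset.coe_image] at he'
          obtain ⟨e₁, he₁, rfl⟩ := he'
          obtain ⟨c, d, rfl, hcd⟩ := DUK1.edge_down G' (hF he₁)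
          rw [Sym2.map_pair_eq, SimpleGraph.mem_edgeSet]
          exact hcd
        · rw [Finset.image_image]
          have : ∀ e₁ ∈ F, (Sym2.map Sum.inl ∘ Sym2.map ret) e₁ = id e₁ := by
            intro e₁ he₁
            obtain ⟨c, d, rfl, -⟩ := DUK1.edge_down G' (hF he₁)
            simp [Sym2.map_pair_eq, hret]
          rw [Finset.image_congr this, Finset.image_id]
    obtain ⟨F₀, h1, h2, h3⟩ := hex
    refine ⟨F₀, h1, le_trans h2 hcard, ?_⟩
    rw [← h3] at hfree
    rw [Finset.coe_image] at hfree
    intro hcopy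
    exact hfree ((DUK1.copy_iff G' ↑F₀ H v hv).2 hcopy)
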